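/- Let p ≥ 1, let x, x′ ∈ ℝ^d with x′ = x + δx and (∑_{i=1}^d |δx_i|^p)^{1/p} ≤ ε, and let S_j, S_u ⊆ {1, …, d} each have size n. Define a_j = ∑_{i∈S_j} x_i, a_u = ∑_{i∈S_u} x_i, and set β = a_j − a_u. If β > 0 and ε < β n^{1/p} / (2n) (equivalently 2 n^{1−1/p} ε < β), then the perturbed activations a′_j = ∑_{i∈S_j} x′_i and a′_u = ∑_{i∈S_u} x′_i satisfy a′_j > a′_u; that is, the pairwise order of the two Kenyon cell activations is preserved. -/

import Mathlib

open Real Finset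

/-- Preservation of the pairwise order of two Kenyon cell activations under small ℓ^p
perturbations: with `β = a_j - a_u > 0` and `ε < β * n ^ (1/p) / (2 * n)`, the perturbed
activations satisfy `a'_j > a'_u`. -/
theorem kenyon_pairwise_order_preserved
    (p : ℝ) (hp : 1 ≤ p) (d n : ℕ) (hn : 0 < n) (ε : ℝ)
    (x x' δx : Fin d → ℝ) (hx' : x' = x + δx)
    (hδx : (∑ i, |δx i| ^ p) ^ (1 / p) ≤ ε)
    (Sj Su : Finset (Fin d)) (hSj : Sj.card = n) (hSu : Su.card = n)
    (aj au aj' au' β : ℝ)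
    (haj : aj = ∑ i ∈ Sj, x i) (hau : au = ∑ i ∈ Su, x i)
    (haj' : aj' = ∑ i ∈ Sj, x' i) (hau' : au' = ∑ i ∈ Su, x' i)
    (hβ : β = aj - au) (hβpos : 0 < β)
    (hε : ε < β * (n : ℝ) ^ (1 / p) / (2 * n)) :
    aj' > au' := by
  have hp0 : 0 < p := lt_of_lt_of_le one_pos hp
  have hnpos : (0:ℝ) < (n:ℝ) := by exact_mod_cast hn
  -- bound on the perturbation over a set of size n
  have key : ∀ S : Finset (Fin d), S.card = n →
      |∑ i ∈ S, δx i| ≤ (n:ℝ) ^ (1 - 1/p) * ε := by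
    intro S hS
    have h1 : |∑ i ∈ S, δx i| ≤ ∑ i ∈ S, |δx i| := Finset.abs_sum_le_sum_abs _ _
    have h2 : ∑ i ∈ S, |δx i| ≤ (∑ i ∈ S, (1:ℝ)) ^ (1 - p⁻¹) * (∑ i ∈ S, 1 * |δx i| ^ p) ^ p⁻¹ := by
      have := Real.inner_le_weight_mul_Lp_of_nonneg S hp (fun _ => (1:ℝ)) (fun i => |δx i|)
        (fun _ => zero_le_one) (fun i => abs_nonneg _)
      simpa using this
    have hsum1 : (∑ i ∈ S, (1:ℝ)) = (n:ℝ) := by simp [hS]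
    have hmono : (∑ i ∈ S, |δx i| ^ p) ≤ ∑ i, |δx i| ^ p :=
      Finset.sum_le_sum_of_subset_of_nonneg (Finset.subset_univ S)
        (fun i _ _ => Real.rpow_nonneg (abs_nonneg _) p)
    have h3 : (∑ i ∈ S, |δx i| ^ p) ^ (1/p) ≤ ε := by
      refine le_trans ?_ hδx
      exact Real.rpow_le_rpow (Finset.sum_nonneg fun i _ => Real.rpow_nonneg (abs_nonneg _) p)
        hmono (by positivity)
    calc |∑ i ∈ S, δx i| ≤ ∑ i ∈ S, |δx i| := h1
      _ ≤ (∑ i ∈ S, (1:ℝ)) ^ (1 - p⁻¹) * (∑ i ∈ S, 1 * |δx i| ^ p) ^ p⁻¹ := h2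
      _ = (n:ℝ) ^ (1 - 1/p) * (∑ i ∈ S, |δx i| ^ p) ^ (1/p) := by
          rw [hsum1]; simp [one_div]
      _ ≤ (n:ℝ) ^ (1 - 1/p) * ε := by
          exact mul_le_mul_of_nonneg_left h3 (Real.rpow_nonneg hnpos.le _)
  have hj := key Sj hSj
  have hu := key Su hSu
  -- key numeric inequality: 2 * n ^ (1 - 1/p) * ε < β
  have hnum : 2 * (n:ℝ) ^ (1 - 1/p) * ε < β := by
    have hεn : ε * (2 * n) < β * (n:ℝ) ^ (1/p) :=
      (lt_div_iff₀ (by positivity)).mp hε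
    have hsplit : (n:ℝ) = (n:ℝ) ^ (1 - 1/p) * (n:ℝ) ^ (1/p) := by
      rw [← Real.rpow_add hnpos, sub_add_cancel, Real.rpow_one]
    have hp' : (0:ℝ) < (n:ℝ) ^ (1/p) := Real.rpow_pos_of_pos hnpos _
    rw [← mul_lt_mul_iff_of_pos_right hp']
    calc 2 * (n:ℝ) ^ (1 - 1/p) * ε * (n:ℝ) ^ (1/p)
        = ε * (2 * ((n:ℝ) ^ (1 - 1/p) * (n:ℝ) ^ (1/p))) := by ring
      _ = ε * (2 * n) := by rw [← hsplit]
      _ < β * (n:ℝ) ^ (1/p) := hεn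
  have hdiff : aj' - au' = β + (∑ i ∈ Sj, δx i - ∑ i ∈ Su, δx i) := by
    subst hx' hβ haj hau haj' hau'
    simp [Finset.sum_add_distrib]
    ring
  have habs : |∑ i ∈ Sj, δx i - ∑ i ∈ Su, δx i| ≤ 2 * (n:ℝ) ^ (1 - 1/p) * ε := by
    calc |∑ i ∈ Sj, δx i - ∑ i ∈ Su, δx i|
        ≤ |∑ i ∈ Sj, δx i| + |∑ i ∈ Su, δx i| := abs_sub _ _
      _ ≤ (n:ℝ) ^ (1 - 1/p) * ε + (n:ℝ) ^ (1 - 1/p) * ε := add_le_add hj hu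
      _ = 2 * (n:ℝ) ^ (1 - 1/p) * ε := by ring
  have : -(2 * (n:ℝ) ^ (1 - 1/p) * ε) ≤ ∑ i ∈ Sj, δx i - ∑ i ∈ Su, δx i :=
    neg_le_of_abs_le habs
  linarith
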